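/- If the structure morphism S → R factors through a localization S → S[L_1^{-1}] for a multiplicative subset L_1 ⊆ S, then HS^m_{R/S} ≅ HS^m_{R/S[L_1^{-1}]}. -/

import Mathlib

noncomputable section
open MvPolynomial

/-- The universal symbols `d^n x` for the Hasse–Schmidt algebra. -/
def hsGen (R : Type*) [CommRing R] (m : ℕ) (n : ℕ) (x : R) :
    MvPolynomial ({i : ℕ // 1 ≤ i ∧ i ≤ m} × R) R :=
  if h : 1 ≤ n ∧ n ≤ m then X (⟨n, h⟩, x) else if n = 0 then C x else 0

/-- The ideal of Hasse–Schmidt relations. -/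
def hsRel (S R : Type*) [CommRing S] [CommRing R] [Algebra S R] (m : ℕ) :
    Ideal (MvPolynomial ({i : ℕ // 1 ≤ i ∧ i ≤ m} × R) R) :=
  Ideal.span {p | (∃ i : ℕ, ∃ x y : R,
      p = hsGen R m i (x + y) - hsGen R m i x - hsGen R m i y) ∨
    (∃ i : ℕ, 1 ≤ i ∧ ∃ s : S, p = hsGen R m i (algebraMap S R s)) ∨
    (∃ k : ℕ, k ≤ m ∧ ∃ x y : R, p = hsGen R m k (x * y) -
      ∑ q ∈ Finset.HasAntidiagonal.antidiagonal k, hsGen R m q.1 x * hsGen R m q.2 y)}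

/-- The Hasse–Schmidt algebra `HS^m_{R/S}`, characterized by the natural bijection
`Hom_{S-alg}(HS^m_{R/S}, Q) ≅ Hom_{S-alg}(R, Q[t]/(t^{m+1}))` for all `S`-algebras `Q`. -/
def HSAlg (S R : Type*) [CommRing S] [CommRing R] [Algebra S R] (m : ℕ) : Type _ :=
  MvPolynomial ({i : ℕ // 1 ≤ i ∧ i ≤ m} × R) R ⧸ hsRel S R m

section
variable (S R : Type*) [CommRing S] [CommRing R] [Algebra S R] (m : ℕ)

instance : CommRing (HSAlg S R m) := Ideal.Quotient.commRing _
instance : Algebra S (HSAlg S R m) := Ideal.Quotient.algebra S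
instance : Algebra R (HSAlg S R m) := Ideal.Quotient.algebra R

end

lemma hsGen_subset_mem {S R : Type*} [CommRing S] [CommRing R] [Algebra S R] {m i : ℕ}
    (hi : 1 ≤ i) (s : S) : hsGen R m i (algebraMap S R s) ∈ hsRel S R m :=
  Ideal.subset_span (Or.inr (Or.inl ⟨i, hi, s, rfl⟩))

lemma hsGen_zero {R : Type*} [CommRing R] {m : ℕ} (x : R) :
    hsGen R m 0 x = C x := by simp [hsGen]

lemma hsRel_eq (S R : Type*) [CommRing S] [CommRing R] [Algebra S R]
    (L₁ : Submonoid S) [Algebra (Localization L₁) R]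
    [IsScalarTower S (Localization L₁) R] (m : ℕ) :
    hsRel S R m = hsRel (Localization L₁) R m := by
  apply le_antisymm
  · apply Ideal.span_mono
    rintro p (h | ⟨i, hi, s, rfl⟩ | h)
    · exact Or.inl h
    · refine Or.inr (Or.inl ⟨i, hi, algebraMap S (Localization L₁) s, ?_⟩)
      rw [← IsScalarTower.algebraMap_apply]
    · exact Or.inr (Or.inr h)
  · rw [hsRel, Ideal.span_le]
    rintro p (h | ⟨i, hi, x, rfl⟩ | h)
    · exact Ideal.subset_span (Or.inl h)
    · -- the key case
      by_cases him : i ≤ m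
      · obtain ⟨⟨s, l⟩, hsl⟩ := IsLocalization.surj L₁ x
        set u : R := algebraMap (Localization L₁) R x with hu
        set c : R := algebraMap S R (l : S) with hc
        have huc : u * c = algebraMap S R s := by
          rw [hu, hc, IsScalarTower.algebraMap_apply S (Localization L₁) R,
            IsScalarTower.algebraMap_apply S (Localization L₁) R, ← map_mul, hsl]
        set I := hsRel S R m with hI
        have hA : hsGen R m i (u * c) -
            ∑ q ∈ Finset.HasAntidiagonal.antidiagonal i, hsGen R m q.1 u * hsGen R m q.2 c ∈ I :=
          Ideal.subset_span (Or.inr (Or.inr ⟨i, him, u, c, rfl⟩))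
        have hd : hsGen R m i (u * c) ∈ I := by
          rw [huc]; exact hsGen_subset_mem hi s
        have hT : ∑ q ∈ Finset.HasAntidiagonal.antidiagonal i, hsGen R m q.1 u * hsGen R m q.2 c ∈ I := by
          have := I.sub_mem hd hA
          simpa using this
        have hrest : ∑ q ∈ Finset.HasAntidiagonal.antidiagonal i \ {(i, 0)},
            hsGen R m q.1 u * hsGen R m q.2 c ∈ I := by
          apply Ideal.sum_mem
          intro q hq
          simp only [Finset.mem_sdiff, Finset.mem_antidiagonal, Finset.mem_singleton] at hq
          have hq2 : 1 ≤ q.2 := by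
            rcases Nat.eq_zero_or_pos q.2 with h0 | h1
            · exfalso; apply hq.2
              have : q.1 = i := by have h : q.1 + q.2 = i := by simpa using hq.1
                                   omega
              exact Prod.ext this h0
            · exact h1
          exact I.mul_mem_left _ (hsGen_subset_mem hq2 (l : S))
        have hmem : (i, 0) ∈ Finset.HasAntidiagonal.antidiagonal i := by simp
        have hsplit : ∑ q ∈ Finset.HasAntidiagonal.antidiagonal i, hsGen R m q.1 u * hsGen R m q.2 c =
            hsGen R m i u * hsGen R m 0 c +
            ∑ q ∈ Finset.HasAntidiagonal.antidiagonal i \ {(i, 0)}, hsGen R m q.1 u * hsGen R m q.2 c := by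
          rw [Finset.sum_eq_sum_sdiff_singleton_add hmem]
          ring
        have hkey : hsGen R m i u * C c ∈ I := by
          have := I.sub_mem hT hrest
          rw [hsplit] at this
          rw [← hsGen_zero c]
          simpa using this
        have hcunit : IsUnit (C c : MvPolynomial ({i : ℕ // 1 ≤ i ∧ i ≤ m} × R) R) := by
          apply IsUnit.map (C : R →+* _)
          rw [hc, IsScalarTower.algebraMap_apply S (Localization L₁) R]
          exact (IsLocalization.map_units (Localization L₁) l).map (algebraMap _ R)
        obtain ⟨w, hw⟩ := hcunit
        have := I.mul_mem_right (↑w⁻¹) hkey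
        rwa [mul_assoc, ← hw, Units.mul_inv, mul_one] at this
      · have : hsGen R m i (algebraMap (Localization L₁) R x) = 0 := by
          rw [hsGen, dif_neg (by omega), if_neg (by omega)]
        rw [this]; exact Ideal.zero_mem _
    · exact Ideal.subset_span (Or.inr (Or.inr h))

/-- If the structure morphism `S → R` factors through the localization
`S[L₁⁻¹]` for a multiplicative subset `L₁ ⊆ S` (i.e. `R` is an `S[L₁⁻¹]`-algebra
compatibly with its `S`-algebra structure), then `HS^m_{R/S} ≅ HS^m_{R/S[L₁⁻¹]}`
as `R`-algebras. -/
theorem hsAlg_base_localization (S R : Type*) [CommRing S] [CommRing R] [Algebra S R]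
    (L₁ : Submonoid S) [Algebra (Localization L₁) R]
    [IsScalarTower S (Localization L₁) R] (m : ℕ) :
    Nonempty (HSAlg S R m ≃ₐ[R] HSAlg (Localization L₁) R m) :=
  ⟨Ideal.quotientEquivAlgOfEq R (hsRel_eq S R L₁ m)⟩
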